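/- Stable partition-relation pairs are upward directed: for any two stable partition-relation pairs (P₁, ≤₁) and (P₂, ≤₂) over the same labeled transition system G (with respect to the same B), there exists a stable partition-relation pair (P₃, ≤₃) with (P₁, ≤₁) ◁ (P₃, ≤₃) and (P₂, ≤₂) ◁ (P₃, ≤₃). -/
import Mathlib


variable {S A : Type*}

/-- R is a partial bisimulation w.r.t. the bisimulation action set B. -/
def IsPB (tm : S → Prop) (tr : S → A → S → Prop) (B : Set A)
    (R : S → S → Prop) : Prop :=
  ∀ p q, R p q →
    (tm p → tm q) ∧
    (∀ a p', tr p a p' → ∃ q', tr q a q' ∧ R p' q') ∧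
    (∀ b q', b ∈ B → tr q b q' → ∃ p', tr p b p' ∧ R p' q')

/-- The partial bisimilarity preorder ≤_B. -/
def PbLe (tm : S → Prop) (tr : S → A → S → Prop) (B : Set A) (p q : S) : Prop :=
  ∃ R, IsPB tm tr B R ∧ R p q

/-- R is a simulation. -/
def IsSim (tm : S → Prop) (tr : S → A → S → Prop) (R : S → S → Prop) : Prop :=
  ∀ p q, R p q →
    (tm p → tm q) ∧
    (∀ a p', tr p a p' → ∃ q', tr q a q' ∧ R p' q')

/-- Strong similarity preorder. -/
def SimLe (tm : S → Prop) (tr : S → A → S → Prop) (p q : S) : Prop :=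
  ∃ R, IsSim tm tr R ∧ R p q

/-- R is a bisimulation: R and its inverse are simulations. -/
def IsBisim (tm : S → Prop) (tr : S → A → S → Prop) (R : S → S → Prop) : Prop :=
  IsSim tm tr R ∧ IsSim tm tr (fun p q => R q p)

/-- Strong bisimilarity. -/
def Bisimilar (tm : S → Prop) (tr : S → A → S → Prop) (p q : S) : Prop :=
  ∃ R, IsBisim tm tr R ∧ R p q

/-- A strong bisimulation: a symmetric relation matching termination and transitions. -/
def IsStrongBisim (tm : S → Prop) (tr : S → A → S → Prop) (R : S → S → Prop) : Prop :=
  Symmetric R ∧ ∀ p q, R p q →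
    (tm p ↔ tm q) ∧
    (∀ a p', tr p a p' → ∃ q', tr q a q' ∧ R p' q')

/-- P is a partition of S: nonempty, covering, pairwise-disjoint classes. -/
def IsPartition' (P : Set (Set S)) : Prop :=
  (∀ Q ∈ P, Q.Nonempty) ∧ (∀ s : S, ∃ Q ∈ P, s ∈ Q) ∧
  (∀ Q ∈ P, ∀ R ∈ P, (Q ∩ R).Nonempty → Q = R)

/-- Partition-relation pair: a partition with a partial order on its classes. -/
def IsPRP (P : Set (Set S)) (le : Set S → Set S → Prop) : Prop :=
  IsPartition' P ∧
  (∀ Q R, le Q R → Q ∈ P ∧ R ∈ P) ∧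
  (∀ Q ∈ P, le Q Q) ∧
  (∀ Q R, le Q R → le R Q → Q = R) ∧
  (∀ Q R T, le Q R → le R T → le Q T)

/-- Every state of P has an a-transition into X. -/
def AllTr (tr : S → A → S → Prop) (a : A) (P X : Set S) : Prop :=
  ∀ p ∈ P, ∃ x ∈ X, tr p a x

/-- Some state of P has an a-transition into X. -/
def ExTr (tr : S → A → S → Prop) (a : A) (P X : Set S) : Prop :=
  ∃ p ∈ P, ∃ x ∈ X, tr p a x

/-- bb(R): union of all big brother classes of R. -/
def bigBro (P : Set (Set S)) (le : Set S → Set S → Prop) (R : Set S) : Set S :=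
  {x | ∃ Q ∈ P, le R Q ∧ x ∈ Q}

/-- lb(R): union of all little brother classes of R. -/
def litBro (P : Set (Set S)) (le : Set S → Set S → Prop) (R : Set S) : Set S :=
  {x | ∃ Q ∈ P, le Q R ∧ x ∈ Q}

/-- Stability of a partition-relation pair (Definition of stability conditions a-d). -/
def IsStable (tm : S → Prop) (tr : S → A → S → Prop) (B : Set A)
    (P : Set (Set S)) (le : Set S → Set S → Prop) : Prop :=
  (∀ Q ∈ P, (∀ q ∈ Q, tm q) ∨ (∀ q ∈ Q, ¬ tm q)) ∧
  (∀ Q R, le Q R → (∀ q ∈ Q, tm q) → (∀ r ∈ R, tm r)) ∧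
  (∀ Q Q' R, R ∈ P → le Q Q' → ∀ a, ExTr tr a Q R → AllTr tr a Q' (bigBro P le R)) ∧
  (∀ Q Q' R, R ∈ P → le Q Q' → ∀ b ∈ B, ExTr tr b Q' R → AllTr tr b Q (litBro P le R))

/-- The order ◁ on partition-relation pairs. -/
def Lhd (P₁ : Set (Set S)) (le₁ : Set S → Set S → Prop)
    (P₂ : Set (Set S)) (le₂ : Set S → Set S → Prop) : Prop :=
  ∀ Q R, le₁ Q R → ∃ Q' ∈ P₂, ∃ R' ∈ P₂, Q ⊆ Q' ∧ R ⊆ R' ∧ le₂ Q' R'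

/-- The relation on states induced by a partition-relation pair. -/
def IndRel (P : Set (Set S)) (le : Set S → Set S → Prop) (p q : S) : Prop :=
  ∃ Q ∈ P, ∃ R ∈ P, le Q R ∧ p ∈ Q ∧ q ∈ R

/-- Equivalence classes of the equivalence kernel R ∩ R⁻¹ of a preorder R. -/
def eqClasses (R : S → S → Prop) : Set (Set S) :=
  {C | ∃ p, C = {q | R p q ∧ R q p}}

/-- The class order induced by a preorder R on its equivalence classes. -/
def classLe (R : S → S → Prop) (Q T : Set S) : Prop :=
  Q ∈ eqClasses R ∧ T ∈ eqClasses R ∧ ∃ p ∈ Q, ∃ q ∈ T, R p q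

/-- The little brother relation ≤' induced on a parent partition P'. -/
def IndLe (le : Set S → Set S → Prop) (P' : Set (Set S)) (Q' R' : Set S) : Prop :=
  Q' ∈ P' ∧ R' ∈ P' ∧ ∃ Q R, le Q R ∧ Q ⊆ Q' ∧ R ⊆ R'

/-- bb'(R') with respect to a parent partition. -/
def bigBro' (le : Set S → Set S → Prop) (P' : Set (Set S)) (R' : Set S) : Set S :=
  {x | ∃ Q' ∈ P', IndLe le P' R' Q' ∧ x ∈ Q'}

/-- lb'(R') with respect to a parent partition. -/
def litBro' (le : Set S → Set S → Prop) (P' : Set (Set S)) (R' : Set S) : Set S :=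
  {x | ∃ Q' ∈ P', IndLe le P' Q' R' ∧ x ∈ Q'}

/-- Stability conditions 1-4 of (P, le) with respect to a parent partition P'. -/
def StableWrt (tm : S → Prop) (tr : S → A → S → Prop) (B : Set A)
    (P : Set (Set S)) (le : Set S → Set S → Prop) (P' : Set (Set S)) : Prop :=
  (∀ Q ∈ P, ∀ a, ∀ R' ∈ P', ExTr tr a Q R' → AllTr tr a Q (bigBro' le P' R')) ∧
  (∀ Q ∈ P, ∀ b ∈ B, ∀ R' ∈ P', ExTr tr b Q R' → AllTr tr b Q (litBro' le P' R')) ∧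
  (∀ Q T, le Q T → ∀ a, ∀ R' ∈ P', AllTr tr a Q R' → AllTr tr a T (bigBro' le P' R')) ∧
  (∀ Q T, le Q T → ∀ b ∈ B, ∀ R' ∈ P', AllTr tr b T R' → AllTr tr b Q (litBro' le P' R'))

/-- P' is a parent partition of P. -/
def IsParent (P P' : Set (Set S)) : Prop :=
  IsPartition' P' ∧ ∀ Q ∈ P, ∃ Q' ∈ P', Q ⊆ Q'

/-- The partition obtained by splitting the class P₀ of P' into S' and P₀ \ S'. -/
def splitPart (P' : Set (Set S)) (P₀ Sp : Set S) : Set (Set S) :=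
  (P' \ {P₀}) ∪ {Sp, P₀ \ Sp}

/-- Some le-related pair of classes lies inside (X, Y). -/
def relBetween (le : Set S → Set S → Prop) (X Y : Set S) : Prop :=
  ∃ Q R, le Q R ∧ Q ⊆ X ∧ R ⊆ Y

/-- Sp is a splitter of the class P₀ of the parent partition P' with respect to P. -/
def IsSplitter (P : Set (Set S)) (le : Set S → Set S → Prop)
    (P' : Set (Set S)) (P₀ Sp : Set S) : Prop :=
  P₀ ∈ P' ∧ Sp ⊆ P₀ ∧ Sp.Nonempty ∧ (P₀ \ Sp).Nonempty ∧
  (∀ Q ∈ P, Q ⊆ Sp ∨ Q ∩ Sp = ∅) ∧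
  (relBetween le Sp (P₀ \ Sp) ∨
    (¬ relBetween le Sp (P₀ \ Sp) ∧ ¬ relBetween le (P₀ \ Sp) Sp))

/-- (Pr, ler) is the result Refine(P, le, P', Sp): the ◁-coarsest pair ◁-below (P, le)
stable with respect to the split parent partition. -/
def IsRefineOf (tm : S → Prop) (tr : S → A → S → Prop) (B : Set A)
    (P : Set (Set S)) (le : Set S → Set S → Prop)
    (P' : Set (Set S)) (P₀ Sp : Set S)
    (Pr : Set (Set S)) (ler : Set S → Set S → Prop) : Prop :=
  IsPRP Pr ler ∧ Lhd Pr ler P le ∧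
  StableWrt tm tr B Pr ler (splitPart P' P₀ Sp) ∧
  ∀ Q lq, IsPRP Q lq → Lhd Q lq P le →
    StableWrt tm tr B Q lq (splitPart P' P₀ Sp) → Lhd Q lq Pr ler

section Aux

variable (tm : S → Prop) (tr : S → A → S → Prop) (B : Set A)

lemma pbLe_refl (p : S) : PbLe tm tr B p p := by
  refine ⟨Eq, ?_, rfl⟩
  intro p q h; subst h
  exact ⟨id, fun a p' h => ⟨p', h, rfl⟩, fun b q' _ h => ⟨q', h, rfl⟩⟩

lemma pbLe_trans {p q r : S} (h1 : PbLe tm tr B p q) (h2 : PbLe tm tr B q r) :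
    PbLe tm tr B p r := by
  obtain ⟨R1, hR1, hpq⟩ := h1
  obtain ⟨R2, hR2, hqr⟩ := h2
  refine ⟨fun x z => ∃ y, R1 x y ∧ R2 y z, ?_, q, hpq, hqr⟩
  rintro x z ⟨y, hxy, hyz⟩
  obtain ⟨t1, s1, b1⟩ := hR1 x y hxy
  obtain ⟨t2, s2, b2⟩ := hR2 y z hyz
  refine ⟨fun h => t2 (t1 h), ?_, ?_⟩
  · intro a x' hx
    obtain ⟨y', hy, hr1⟩ := s1 a x' hx
    obtain ⟨z', hz, hr2⟩ := s2 a y' hy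
    exact ⟨z', hz, y', hr1, hr2⟩
  · intro b z' hb hz
    obtain ⟨y', hy, hr2⟩ := b2 b z' hb hz
    obtain ⟨x', hx, hr1⟩ := b1 b y' hb hy
    exact ⟨x', hx, y', hr1, hr2⟩

lemma pbLe_isPB : IsPB tm tr B (PbLe tm tr B) := by
  rintro p q ⟨R, hR, hpq⟩
  obtain ⟨t, s, bk⟩ := hR p q hpq
  exact ⟨t,
    fun a p' h => (s a p' h).imp fun q' hh => ⟨hh.1, R, hR, hh.2⟩,
    fun b q' hb h => (bk b q' hb h).imp fun p' hh => ⟨hh.1, R, hR, hh.2⟩⟩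

lemma indRel_isPB {P : Set (Set S)} {le : Set S → Set S → Prop}
    (h : IsPRP P le) (hs : IsStable tm tr B P le) :
    IsPB tm tr B (IndRel P le) := by
  obtain ⟨hpart, hmem, hrefl, _, _⟩ := h
  obtain ⟨ha, hb, hc, hd⟩ := hs
  rintro p q ⟨Q, hQ, R', hR', hle, hp, hq⟩
  refine ⟨?_, ?_, ?_⟩
  · intro htp
    have hall : ∀ x ∈ Q, tm x := by
      rcases ha Q hQ with h | h
      · exact h
      · exact absurd htp (h p hp)
    exact hb Q R' hle hall q hq
  · intro a p' hpp'
    obtain ⟨T, hT, hp'⟩ := hpart.2.1 p'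
    have hex : ExTr tr a Q T := ⟨p, hp, p', hp', hpp'⟩
    obtain ⟨q', hq', hqq'⟩ := hc Q R' T hT hle a hex q hq
    obtain ⟨U, hU, hTU, hq'U⟩ := hq'
    exact ⟨q', hqq', T, hT, U, hU, hTU, hp', hq'U⟩
  · intro b q' hbB hqq'
    obtain ⟨T, hT, hq'⟩ := hpart.2.1 q'
    have hex : ExTr tr b R' T := ⟨q, hq, q', hq', hqq'⟩
    obtain ⟨p', hp', hpp'⟩ := hd Q R' T hT hle b hbB hex p hp
    obtain ⟨U, hU, hUT, hp'U⟩ := hp'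
    exact ⟨p', hpp', U, hU, T, hT, hUT, hp'U, hq'⟩

end Aux

/-- stable partition-relation pairs are upward ◁-directed. -/
theorem stable_directed (tm : S → Prop) (tr : S → A → S → Prop) (B : Set A)
    (P₁ : Set (Set S)) (le₁ : Set S → Set S → Prop)
    (P₂ : Set (Set S)) (le₂ : Set S → Set S → Prop)
    (h₁ : IsPRP P₁ le₁) (hs₁ : IsStable tm tr B P₁ le₁)
    (h₂ : IsPRP P₂ le₂) (hs₂ : IsStable tm tr B P₂ le₂) :
    ∃ (P₃ : Set (Set S)) (le₃ : Set S → Set S → Prop),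
      IsPRP P₃ le₃ ∧ IsStable tm tr B P₃ le₃ ∧
      Lhd P₁ le₁ P₃ le₃ ∧ Lhd P₂ le₂ P₃ le₃ := by
  set ρ : S → S → Prop := PbLe tm tr B with hρ
  have hrefl : ∀ p, ρ p p := pbLe_refl tm tr B
  have htrans : ∀ {p q r}, ρ p q → ρ q r → ρ p r := fun h1 h2 => pbLe_trans tm tr B h1 h2
  have hPB : IsPB tm tr B ρ := pbLe_isPB tm tr B
  -- the class of a point
  set cl : S → Set S := fun p => {q | ρ p q ∧ ρ q p} with hcl
  have hclmem : ∀ p, cl p ∈ eqClasses ρ := fun p => ⟨p, rfl⟩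
  have hselfmem : ∀ p, p ∈ cl p := fun p => ⟨hrefl p, hrefl p⟩
  have hcleq : ∀ {a b : S}, ρ a b → ρ b a → cl a = cl b := by
    intro a b h1 h2
    ext x
    exact ⟨fun hx => ⟨htrans h2 hx.1, htrans hx.2 h1⟩,
           fun hx => ⟨htrans h1 hx.1, htrans hx.2 h2⟩⟩
  -- shape facts about classes
  refine ⟨eqClasses ρ, classLe ρ, ?_, ?_, ?_, ?_⟩
  · -- IsPRP
    refine ⟨⟨?_, ?_, ?_⟩, ?_, ?_, ?_, ?_⟩
    · rintro Q ⟨p, rfl⟩; exact ⟨p, hselfmem p⟩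
    · intro s; exact ⟨cl s, hclmem s, hselfmem s⟩
    · rintro Q ⟨a, rfl⟩ R ⟨b, rfl⟩ ⟨r, hra, hrb⟩
      exact hcleq (htrans hra.1 hrb.2) (htrans hrb.1 hra.2)
    · intro Q R h; exact ⟨h.1, h.2.1⟩
    · rintro Q ⟨p, rfl⟩
      exact ⟨hclmem p, hclmem p, p, hselfmem p, p, hselfmem p, hrefl p⟩
    · rintro Q R ⟨⟨a, rfl⟩, ⟨b, rfl⟩, p, hp, q, hq, hpq⟩ ⟨_, _, p', hp', q', hq', hp'q'⟩
      -- p ∈ cl a, q ∈ cl b, ρ p q ; p' ∈ cl b, q' ∈ cl a, ρ p' q'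
      have hab : ρ a b := htrans hp.1 (htrans hpq hq.2)
      have hba : ρ b a := htrans hp'.1 (htrans hp'q' hq'.2)
      exact hcleq hab hba
    · rintro Q R T ⟨hQ, ⟨b, rfl⟩, p, hp, q, hq, hpq⟩ ⟨_, hT, p', hp', q', hq', hp'q'⟩
      refine ⟨hQ, hT, p, hp, q', hq', ?_⟩
      exact htrans hpq (htrans hq.2 (htrans hp'.1 hp'q'))
  · -- IsStable
    refine ⟨?_, ?_, ?_, ?_⟩
    · rintro Q ⟨p, rfl⟩
      by_cases htp : tm p
      · exact Or.inl fun q hq => (hPB p q hq.1).1 htp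
      · exact Or.inr fun q hq htq => htp ((hPB q p hq.2).1 htq)
    · rintro Q R ⟨⟨a, rfl⟩, ⟨b, rfl⟩, p, hp, q, hq, hpq⟩ hall r hr
      have h1 : tm q := (hPB p q hpq).1 (hall p hp)
      have h2 : tm b := (hPB q b hq.2).1 h1
      exact (hPB b r hr.1).1 h2
    · rintro Q Q' R hR ⟨⟨c, rfl⟩, ⟨d, rfl⟩, p, hp, q, hq, hpq⟩ a ⟨x, hx, x', hx', hxx'⟩ y hy
      have hxy : ρ x y :=
        htrans hx.2 (htrans hp.1 (htrans hpq (htrans hq.2 hy.1)))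
      obtain ⟨y', hty, hr⟩ := (hPB x y hxy).2.1 a x' hxx'
      exact ⟨y', ⟨cl y', hclmem y', ⟨hR, hclmem y', x', hx', y', hselfmem y', hr⟩,
        hselfmem y'⟩, hty⟩
    · rintro Q Q' R hR ⟨⟨c, rfl⟩, ⟨d, rfl⟩, p, hp, q, hq, hpq⟩ b hbB ⟨x, hx, x', hx', hxx'⟩ y hy
      have hyx : ρ y x :=
        htrans hy.2 (htrans hp.1 (htrans hpq (htrans hq.2 hx.1)))
      obtain ⟨y', hty, hr⟩ := (hPB y x hyx).2.2 b x' hbB hxx'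
      exact ⟨y', ⟨cl y', hclmem y', ⟨hclmem y', hR, y', hselfmem y', x', hx', hr⟩,
        hselfmem y'⟩, hty⟩
  all_goals {
    first
    | (have hprp := h₁; have hst := hs₁
       intro Q R hle
       have hsub : ∀ x y, IndRel P₁ le₁ x y → ρ x y :=
         fun x y h => ⟨IndRel P₁ le₁, indRel_isPB tm tr B hprp hst, h⟩
       have hQP : Q ∈ P₁ := (hprp.2.1 Q R hle).1
       have hRP : R ∈ P₁ := (hprp.2.1 Q R hle).2
       obtain ⟨q₀, hq₀⟩ := hprp.1.1 Q hQP
       obtain ⟨r₀, hr₀⟩ := hprp.1.1 R hRP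
       refine ⟨cl q₀, hclmem q₀, cl r₀, hclmem r₀, ?_, ?_, ?_⟩
       · intro q hq
         exact ⟨hsub q₀ q ⟨Q, hQP, Q, hQP, hprp.2.2.1 Q hQP, hq₀, hq⟩,
                hsub q q₀ ⟨Q, hQP, Q, hQP, hprp.2.2.1 Q hQP, hq, hq₀⟩⟩
       · intro r hr
         exact ⟨hsub r₀ r ⟨R, hRP, R, hRP, hprp.2.2.1 R hRP, hr₀, hr⟩,
                hsub r r₀ ⟨R, hRP, R, hRP, hprp.2.2.1 R hRP, hr, hr₀⟩⟩
       · exact ⟨hclmem q₀, hclmem r₀, q₀, hselfmem q₀, r₀, hselfmem r₀,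
           hsub q₀ r₀ ⟨Q, hQP, R, hRP, hle, hq₀, hr₀⟩⟩)
    | (have hprp := h₂; have hst := hs₂
       intro Q R hle
       have hsub : ∀ x y, IndRel P₂ le₂ x y → ρ x y :=
         fun x y h => ⟨IndRel P₂ le₂, indRel_isPB tm tr B hprp hst, h⟩
       have hQP : Q ∈ P₂ := (hprp.2.1 Q R hle).1
       have hRP : R ∈ P₂ := (hprp.2.1 Q R hle).2
       obtain ⟨q₀, hq₀⟩ := hprp.1.1 Q hQP
       obtain ⟨r₀, hr₀⟩ := hprp.1.1 R hRP
       refine ⟨cl q₀, hclmem q₀, cl r₀, hclmem r₀, ?_, ?_, ?_⟩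
       · intro q hq
         exact ⟨hsub q₀ q ⟨Q, hQP, Q, hQP, hprp.2.2.1 Q hQP, hq₀, hq⟩,
                hsub q q₀ ⟨Q, hQP, Q, hQP, hprp.2.2.1 Q hQP, hq, hq₀⟩⟩
       · intro r hr
         exact ⟨hsub r₀ r ⟨R, hRP, R, hRP, hprp.2.2.1 R hRP, hr₀, hr⟩,
                hsub r r₀ ⟨R, hRP, R, hRP, hprp.2.2.1 R hRP, hr, hr₀⟩⟩
       · exact ⟨hclmem q₀, hclmem r₀, q₀, hselfmem q₀, r₀, hselfmem r₀,
           hsub q₀ r₀ ⟨Q, hQP, R, hRP, hle, hq₀, hr₀⟩⟩)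
  }
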